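/- Let G be a forest on n vertices with exactly m isolated vertices, and let k ≥ 0 be an integer. Then α_k(G) ≥ (n − m)(k+1)/(k+2) + m, where α_k(G) is the maximum size of a vertex set S with Δ(G[S]) ≤ k. -/

import Mathlib

open SimpleGraph Finset

/-- The minimum degree of a subgraph `H` of `G`: the infimum over vertices of `H`
of the number of neighbors in `H`. -/
noncomputable def subMinDeg {V : Type*} (G : SimpleGraph V) (H : G.Subgraph) : ℕ :=
  sInf ((fun v => (H.neighborSet v).ncard) '' H.verts)

/-- The degenerate degree `ζ(v)`: the maximum of `δ(H)` over all subgraphs `H` of `G`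
containing `v`. -/
noncomputable def zeta {V : Type*} (G : SimpleGraph V) (v : V) : ℕ :=
  sSup {n | ∃ H : G.Subgraph, v ∈ H.verts ∧ subMinDeg G H = n}

/-- A vertex `u` is cheap if `ζ(u) = deg_G(u)` and `ζ(u) ≤ ζ(w)` for every `w ∈ N[u]`. -/
def Cheap {V : Type*} (G : SimpleGraph V) (u : V) : Prop :=
  zeta G u = (G.neighborSet u).ncard ∧ ∀ w, G.Adj u w → zeta G u ≤ zeta G w

lemma exists_good_vertex {V : Type*} [Fintype V] [DecidableEq V] (G : SimpleGraph V)
    [DecidableRel G.Adj] (hG : G.IsAcyclic) (A : Finset V) (hA : A.Nonempty)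
    (hdeg : ∀ v ∈ A, ∃ x ∈ A, G.Adj v x) :
    ∃ u ∈ A, (∃ l ∈ A, G.Adj u l ∧ ∀ x ∈ A, G.Adj l x → x = u) ∧
      ∃ z : V, ∀ x ∈ A, G.Adj u x → (∀ y ∈ A, G.Adj x y → y = u) ∨ x = z := by
  classical
  set S : Set ℕ :=
    {n | ∃ (a b : V) (p : G.Walk a b), p.IsPath ∧ (∀ x ∈ p.support, x ∈ A) ∧ p.length = n}
    with hS
  obtain ⟨a₀, ha₀⟩ := hA
  obtain ⟨b₀, hb₀, hadj₀⟩ := hdeg a₀ ha₀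
  have h1S : 1 ∈ S := by
    refine ⟨a₀, b₀, Walk.cons hadj₀ Walk.nil, ?_, ?_, rfl⟩
    · simp [Walk.cons_isPath_iff, hadj₀.ne]
    · intro x hx
      simp only [Walk.support_cons, Walk.support_nil, List.mem_cons, List.not_mem_nil,
        or_false] at hx
      rcases hx with rfl | rfl
      · exact ha₀
      · exact hb₀
  have hbdd : BddAbove S := by
    refine ⟨Fintype.card V, fun n hn => ?_⟩
    obtain ⟨a, b, p, hp, -, rfl⟩ := hn
    exact hp.length_lt.le
  have hNS : sSup S ∈ S := Nat.sSup_mem ⟨1, h1S⟩ hbdd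
  set N := sSup S with hNdef
  have hmax : ∀ n ∈ S, n ≤ N := fun n hn => le_csSup hbdd hn
  obtain ⟨a, b, p, hp, hsupA, hlen⟩ := hNS
  have hN1 : 1 ≤ N := hmax 1 h1S
  cases p with
  | nil => simp at hlen; omega
  | @cons _ u _ hadj q =>
    have ha : a ∈ A := hsupA a (by simp)
    have hu : u ∈ A := hsupA u (by simp [Walk.support_cons, q.start_mem_support])
    have hq : q.IsPath := hp.of_cons
    have haq : a ∉ q.support := ((Walk.cons_isPath_iff _ _).mp hp).2
    have hlenq : q.length + 1 = N := by simpa using hlen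
    have hqsupA : ∀ x ∈ q.support, x ∈ A := by
      intro x hx; exact hsupA x (by simp [Walk.support_cons, hx])
    -- Claim 1 : every neighbour of `a` in `A` is `u`.
    have claim1 : ∀ x ∈ A, G.Adj a x → x = u := by
      intro x hxA hax
      by_contra hxu
      have hxa : x ≠ a := fun h => G.irrefl (h ▸ hax)
      by_cases hxs : x ∈ (Walk.cons hadj q).support
      · have h2 : (Walk.cons hax Walk.nil : G.Walk a x).IsPath := by
          rw [Walk.cons_isPath_iff]
          refine ⟨Walk.IsPath.nil, ?_⟩
          simp only [Walk.support_nil, List.mem_singleton]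
          exact fun h => hxa h.symm
        have htu : ((Walk.cons hadj q).takeUntil x hxs) = Walk.cons hax Walk.nil :=
          congrArg Subtype.val (hG.path_unique ⟨_, hp.takeUntil hxs⟩ ⟨_, h2⟩)
        have hspec := (Walk.cons hadj q).take_spec hxs
        rw [htu, Walk.cons_append, Walk.nil_append] at hspec
        have hsup := congrArg Walk.support hspec
        rw [Walk.support_cons, Walk.support_cons] at hsup
        have h3 : ((Walk.cons hadj q).dropUntil x hxs).support = q.support := by
          simpa using hsup
        have e1 := Walk.support_eq_cons ((Walk.cons hadj q).dropUntil x hxs)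
        have e2 := Walk.support_eq_cons q
        rw [e1, e2] at h3
        exact hxu (List.head_eq_of_cons_eq h3)
      · have hext : (Walk.cons hax.symm (Walk.cons hadj q)).IsPath := hp.cons hxs
        have hmem : (q.length + 2) ∈ S := by
          refine ⟨x, b, _, hext, ?_, by simp⟩
          intro y hy
          rw [Walk.support_cons, List.mem_cons] at hy
          rcases hy with rfl | hy
          · exact hxA
          · exact hsupA y hy
        have := hmax _ hmem; omega
    refine ⟨u, hu, ⟨a, ha, hadj.symm, claim1⟩, q.getVert 1, ?_⟩
    intro x hxA hux
    by_cases hxz : x = q.getVert 1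
    · exact Or.inr hxz
    by_cases hxa : x = a
    · subst hxa; exact Or.inl claim1
    left
    have hxu' : x ≠ u := fun h => G.irrefl (h ▸ hux)
    have hxq : x ∉ q.support := by
      intro hxq
      have h2 : (Walk.cons hux Walk.nil : G.Walk u x).IsPath := by
        rw [Walk.cons_isPath_iff]
        refine ⟨Walk.IsPath.nil, ?_⟩
        simp only [Walk.support_nil, List.mem_singleton]
        exact fun h => hxu' h.symm
      have htu : q.takeUntil x hxq = Walk.cons hux Walk.nil :=
        congrArg Subtype.val (hG.path_unique ⟨_, hq.takeUntil hxq⟩ ⟨_, h2⟩)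
      have hspec := q.take_spec hxq
      rw [htu, Walk.cons_append, Walk.nil_append] at hspec
      have : q.getVert 1 = x := by
        rw [← hspec]; simp [Walk.getVert_cons_succ, Walk.getVert_zero]
      exact hxz this.symm
    have hxs : x ∉ (Walk.cons hadj q).support := by
      rw [Walk.support_cons]; simp [hxa, hxq]
    intro y hyA hxy
    by_contra hyu
    by_cases hys : y ∈ (Walk.cons hadj q).support
    · rw [Walk.support_cons, List.mem_cons] at hys
      rcases hys with rfl | hyq
      · -- y = a : two distinct paths x → a
        have hp1 : (Walk.cons hxy Walk.nil : G.Walk x y).IsPath := by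
          simp [Walk.cons_isPath_iff, hxy.ne]
        have huy : u ≠ y := fun h => G.irrefl (h ▸ hadj)
        have hp2 : (Walk.cons hux.symm (Walk.cons hadj.symm Walk.nil) : G.Walk x y).IsPath := by
          rw [Walk.cons_isPath_iff, Walk.cons_isPath_iff]
          refine ⟨⟨Walk.IsPath.nil, ?_⟩, ?_⟩
          · simp only [Walk.support_nil, List.mem_singleton]
            exact huy
          · simp only [Walk.support_cons, Walk.support_nil, List.mem_cons,
              List.not_mem_nil, or_false]
            push_neg
            exact ⟨hxu', hxa⟩
        have := hG.path_unique ⟨_, hp1⟩ ⟨_, hp2⟩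
        have hlen2 := congrArg (fun P : G.Path x y => P.val.length) this
        simp at hlen2
      · have hyu' : y ≠ u := hyu
        have hp1 : (Walk.cons hxy Walk.nil : G.Walk x y).IsPath := by
          simp [Walk.cons_isPath_iff, hxy.ne]
        have hp2 : (Walk.cons hux.symm (q.takeUntil y hyq) : G.Walk x y).IsPath := by
          rw [Walk.cons_isPath_iff]
          exact ⟨hq.takeUntil hyq, fun h => hxq (q.support_takeUntil_subset hyq h)⟩
        have := hG.path_unique ⟨_, hp1⟩ ⟨_, hp2⟩
        have hlen2 := congrArg (fun P : G.Path x y => P.val.length) this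
        simp only [Walk.length_cons, Walk.length_nil] at hlen2
        have : (q.takeUntil y hyq).length = 0 := by omega
        exact hyu' (Walk.eq_of_length_eq_zero this).symm
    · -- extend the path by two vertices
      have hin : (Walk.cons hux.symm q).IsPath := hq.cons hxq
      have hys' : y ∉ (Walk.cons hux.symm q).support := by
        rw [Walk.support_cons]
        simp only [List.mem_cons]
        push_neg
        refine ⟨fun h => hxy.ne (h.symm), fun h => hys ?_⟩
        rw [Walk.support_cons]; exact List.mem_cons_of_mem _ h
      have hext : (Walk.cons hxy.symm (Walk.cons hux.symm q)).IsPath := hin.cons hys'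
      have hmem : (q.length + 2) ∈ S := by
        refine ⟨y, b, _, hext, ?_, by simp⟩
        intro v hv
        rw [Walk.support_cons, List.mem_cons] at hv
        rcases hv with rfl | hv
        · exact hyA
        rw [Walk.support_cons, List.mem_cons] at hv
        rcases hv with rfl | hv
        · exact hxA
        · exact hqsupA v hv
      have := hmax _ hmem; omega

set_option maxHeartbeats 2000000 in
lemma forest_weighted {V : Type*} [Fintype V] [DecidableEq V] (G : SimpleGraph V)
    [DecidableRel G.Adj] (hG : G.IsAcyclic) (k : ℕ) :
    ∀ (N : ℕ) (A : Finset V) (w : V → ℕ), A.card ≤ N →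
      ∃ s ⊆ A, (∀ v ∈ s, (s.filter (G.Adj v)).card + w v ≤ k) ∧
        (k+1) * A.card + (A.filter (fun v => ∀ x ∈ A, ¬ G.Adj v x)).card
          ≤ (k+2) * s.card + 2 * ∑ v ∈ A, w v := by
  classical
  intro N
  induction N with
  | zero =>
    intro A w hA
    have : A = ∅ := card_eq_zero.mp (Nat.le_zero.mp hA)
    subst this
    exact ⟨∅, by simp⟩
  | succ N ih =>
    intro A w hA
    rcases eq_or_ne A ∅ with rfl | hAne'
    · exact ⟨∅, by simp⟩
    have hAne : A.Nonempty := nonempty_iff_ne_empty.mpr hAne'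
    by_cases hiso : ∃ v ∈ A, ∀ x ∈ A, ¬ G.Adj v x
    · -- there is an isolated vertex in A
      obtain ⟨v, hvA, hvI⟩ := hiso
      have hA' : (A.erase v).card ≤ N := by
        rw [card_erase_of_mem hvA]
        have := card_pos.mpr hAne
        omega
      obtain ⟨s', hs'A, hC1, hC2⟩ := ih (A.erase v) w hA'
      have hvs' : v ∉ s' := fun h => (mem_erase.mp (hs'A h)).1 rfl
      have hisole : (A.filter (fun v' => ∀ x ∈ A, ¬ G.Adj v' x)).card ≤
          ((A.erase v).filter (fun v' => ∀ x ∈ A.erase v, ¬ G.Adj v' x)).card + 1 := by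
        have hsub : A.filter (fun v' => ∀ x ∈ A, ¬ G.Adj v' x) ⊆
            insert v ((A.erase v).filter (fun v' => ∀ x ∈ A.erase v, ¬ G.Adj v' x)) := by
          intro x hx
          rw [mem_filter] at hx
          rcases eq_or_ne x v with rfl | hxv
          · exact mem_insert_self _ _
          · refine mem_insert_of_mem (mem_filter.mpr ⟨mem_erase.mpr ⟨hxv, hx.1⟩, ?_⟩)
            exact fun y hy => hx.2 y (mem_of_mem_erase hy)
        exact (card_le_card hsub).trans (card_insert_le _ _)
      have hAcard : A.card = (A.erase v).card + 1 := by
        rw [card_erase_of_mem hvA]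
        have := card_pos.mpr hAne
        omega
      have hsum : ∑ x ∈ A, w x = ∑ x ∈ A.erase v, w x + w v :=
        (Finset.sum_erase_add A w hvA).symm
      by_cases hwv : w v ≤ k
      · refine ⟨insert v s', ?_, ?_, ?_⟩
        · exact insert_subset hvA (hs'A.trans (erase_subset _ _))
        · intro x hx
          rcases mem_insert.mp hx with rfl | hx'
          · have : (insert x s').filter (G.Adj x) = ∅ := by
              apply filter_eq_empty_iff.mpr
              intro y hy
              rcases mem_insert.mp hy with rfl | hy'
              · exact fun h => G.irrefl h
              · exact hvI y (mem_of_mem_erase (hs'A hy'))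
            rw [this]
            simpa using hwv
          · have : (insert v s').filter (G.Adj x) = s'.filter (G.Adj x) := by
              rw [filter_insert, if_neg]
              exact fun h => hvI x (mem_of_mem_erase (hs'A hx')) h.symm
            rw [this]
            exact hC1 x hx'
        · rw [card_insert_of_notMem hvs', hAcard, hsum]
          have e1 : (k+1) * ((A.erase v).card + 1) = (k+1) * (A.erase v).card + (k+1) := by ring
          have e2 : (k+2) * (s'.card + 1) = (k+2) * s'.card + (k+2) := by ring
          rw [e1, e2]
          omega
      · refine ⟨s', hs'A.trans (erase_subset _ _), hC1, ?_⟩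
        rw [hAcard, hsum]
        have e1 : (k+1) * ((A.erase v).card + 1) = (k+1) * (A.erase v).card + (k+1) := by ring
        rw [e1]
        omega
    · -- no isolated vertex in A
      push_neg at hiso
      have hisoA : A.filter (fun v => ∀ x ∈ A, ¬ G.Adj v x) = ∅ := by
        apply filter_eq_empty_iff.mpr
        intro v hv
        push_neg
        exact hiso v hv
      obtain ⟨u, huA, ⟨l₀, hl₀A, hul₀, hl₀only⟩, z, hz⟩ :=
        exists_good_vertex G hG A hAne hiso
      set L := A.filter (fun l => G.Adj u l ∧ ∀ x ∈ A, G.Adj l x → x = u) with hLdef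
      have hl₀L : l₀ ∈ L := mem_filter.mpr ⟨hl₀A, hul₀, hl₀only⟩
      have hLA : L ⊆ A := filter_subset _ _
      have huL : u ∉ L := fun h => G.irrefl (mem_filter.mp h).2.1
      have hLonly : ∀ l ∈ L, ∀ x ∈ A, G.Adj l x → x = u := fun l hl => (mem_filter.mp hl).2.2
      have hLadj : ∀ l ∈ L, G.Adj u l := fun l hl => (mem_filter.mp hl).2.1
      set P := A.filter (fun x => G.Adj u x ∧ x ∉ L) with hPdef
      have hPz : P ⊆ {z} := by
        intro x hx
        rw [mem_filter] at hx
        rw [mem_singleton]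
        rcases hz x hx.1 hx.2.1 with honly | hxz
        · exact absurd (mem_filter.mpr ⟨hx.1, hx.2.1, honly⟩) hx.2.2
        · exact hxz
      have hPcard : P.card ≤ 1 := by
        simpa using card_le_card hPz
      have huP : ∀ x ∈ A, G.Adj u x → x ∈ L ∨ x ∈ P := by
        intro x hx hadj
        by_cases hL : x ∈ L
        · exact Or.inl hL
        · exact Or.inr (mem_filter.mpr ⟨hx, hadj, hL⟩)
      set t := L.card with htdef
      have ht1 : 1 ≤ t := card_pos.mpr ⟨l₀, hl₀L⟩
      have hinsA : insert u L ⊆ A := insert_subset huA hLA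
      set A₁ := A \ insert u L with hA₁def
      have huA₁ : u ∉ A₁ := fun h => (mem_sdiff.mp h).2 (mem_insert_self _ _)
      have hLA₁ : ∀ l ∈ L, l ∉ A₁ := fun l hl h => (mem_sdiff.mp h).2 (mem_insert_of_mem hl)
      have hcard1 : A₁.card + (t + 1) = A.card := by
        have := card_sdiff_add_card_eq_card hinsA
        rwa [card_insert_of_notMem huL] at this
      have hA₁N : A₁.card ≤ N := by omega
      have hPA₁ : P ⊆ A₁ := by
        intro x hx
        rw [mem_filter] at hx
        rw [mem_sdiff, mem_insert]
        push_neg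
        exact ⟨hx.1, fun h => G.ne_of_adj hx.2.1 h.symm, hx.2.2⟩
      set L0 := L.filter (fun l => w l ≤ k) with hL0def
      set L1 := L.filter (fun l => w l + 1 ≤ k) with hL1def
      have hL1L0 : L1 ⊆ L0 := by
        intro x hx; rw [mem_filter] at *; exact ⟨hx.1, by omega⟩
      set S0 := ∑ l ∈ L0, w l with hS0def
      set Lc := L.filter (fun l => ¬ w l ≤ k) with hLcdef
      have hS1 : (k+1) * Lc.card ≤ ∑ l ∈ Lc, w l := by
        have := Finset.card_nsmul_le_sum Lc w (k+1) (fun x hx => by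
          have := (mem_filter.mp hx).2; omega)
        simpa [smul_eq_mul, mul_comm] using this
      have hcS1 : Lc.card ≤ ∑ l ∈ Lc, w l := le_trans (by nlinarith) hS1
      have hsplitcard : L0.card + Lc.card = t := card_filter_add_card_filter_not _
      have hsplitsum : S0 + ∑ l ∈ Lc, w l = ∑ l ∈ L, w l :=
        sum_filter_add_sum_filter_not _ _ _
      have hsumA : ∑ x ∈ A, w x = ∑ x ∈ A₁, w x + (w u + ∑ l ∈ L, w l) := by
        rw [← Finset.sum_sdiff hinsA, ← hA₁def, sum_insert huL]
      -- the subgraph induced on A has u with leaf-neighbours L and other neighbours P ⊆ {z}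
      by_cases heasy : k + 1 ≤ t + 2 * w u + 2 * S0
      · -- Plan 1 : do not use u, keep the light leaves
        obtain ⟨s', hs'A₁, hC1, hC2⟩ := ih A₁ w hA₁N
        have hdisj : Disjoint s' L0 :=
          Finset.disjoint_left.mpr
            (fun x hx hx0 => hLA₁ x ((filter_subset _ _) hx0) (hs'A₁ hx))
        have hssub : s' ∪ L0 ⊆ A :=
          union_subset (hs'A₁.trans sdiff_subset) ((filter_subset _ _).trans hLA)
        refine ⟨s' ∪ L0, hssub, ?_, ?_⟩
        · intro v hv
          rcases mem_union.mp hv with hv' | hv'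
          · have hvA₁ : v ∈ A₁ := hs'A₁ hv'
            have hfil : (s' ∪ L0).filter (G.Adj v) = s'.filter (G.Adj v) := by
              ext x
              simp only [mem_filter, mem_union]
              constructor
              · rintro ⟨hx | hx, hadj⟩
                · exact ⟨hx, hadj⟩
                · exfalso
                  have hxL : x ∈ L := (filter_subset _ _) hx
                  have hvu : v = u :=
                    hLonly x hxL v ((mem_sdiff.mp hvA₁).1) hadj.symm
                  exact huA₁ (hvu ▸ hvA₁)
              · rintro ⟨hx, hadj⟩; exact ⟨Or.inl hx, hadj⟩
            rw [hfil]
            exact hC1 v hv'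
          · have hfil : (s' ∪ L0).filter (G.Adj v) = ∅ := by
              apply filter_eq_empty_iff.mpr
              intro x hx hadj
              have hvL : v ∈ L := (filter_subset _ _) hv'
              have hxu : x = u := hLonly v hvL x (hssub hx) hadj
              subst hxu
              rcases mem_union.mp hx with h | h
              · exact huA₁ (hs'A₁ h)
              · exact huL ((filter_subset _ _) h)
            rw [hfil]
            have := (mem_filter.mp hv').2
            simpa using this
        · rw [hisoA, card_empty, card_union_of_disjoint hdisj, hsumA, ← hcard1,
            ← hsplitcard, ← hsplitsum]
          nlinarith [hC2, heasy, hS1, hcS1, hsplitcard]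
      · -- not easy
        have helse : t + 2 * w u + 2 * S0 ≤ k := by omega
        have hL01 : L0 = L1 := by
          apply Finset.Subset.antisymm _ hL1L0
          intro l hl
          have hlL := (mem_filter.mp hl).1
          have hwl := (mem_filter.mp hl).2
          have hlS0 : w l ≤ S0 := Finset.single_le_sum (fun i _ => Nat.zero_le _) hl
          rw [mem_filter]
          exact ⟨hlL, by omega⟩
        have hL1A : L1 ⊆ A := (filter_subset _ _).trans hLA
        have hsplitcard2 : L1.card + Lc.card = t := by rw [← hL01]; exact hsplitcard
        have hL1t : L1.card ≤ t := card_le_card (filter_subset _ _)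
        by_cases hup : P = ∅ ∨ t + 1 + w u ≤ k
        · -- Plan 2 : use u and the light leaves, protect the parent
          set w' := fun v => w v + (if v ∈ P then 1 else 0) with hw'def
          obtain ⟨s', hs'A₁, hC1, hC2⟩ := ih A₁ w' hA₁N
          have hsum' : ∑ x ∈ A₁, w' x = ∑ x ∈ A₁, w x + P.card := by
            rw [hw'def, Finset.sum_add_distrib]
            congr 1
            rw [Finset.sum_ite_mem, (Finset.inter_eq_right).mpr hPA₁]
            simp
          rw [hsum'] at hC2
          have hdisj : Disjoint s' L1 :=
            Finset.disjoint_left.mpr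
              (fun x hx hx1 => hLA₁ x ((filter_subset _ _) hx1) (hs'A₁ hx))
          have hus : u ∉ s' ∪ L1 := by
            rw [mem_union]
            push_neg
            exact ⟨fun h => huA₁ (hs'A₁ h), fun h => huL ((filter_subset _ _) h)⟩
          have hssub : insert u (s' ∪ L1) ⊆ A :=
            insert_subset huA (union_subset (hs'A₁.trans sdiff_subset) hL1A)
          refine ⟨insert u (s' ∪ L1), hssub, ?_, ?_⟩
          · intro v hv
            rcases mem_insert.mp hv with rfl | hv'
            · have hsubfil : (insert v (s' ∪ L1)).filter (G.Adj v) ⊆ L1 ∪ P := by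
                intro x hx
                rw [mem_filter] at hx
                obtain ⟨hxs, hadj⟩ := hx
                rcases mem_insert.mp hxs with rfl | hxs'
                · exact absurd hadj (G.irrefl (v := x))
                rcases mem_union.mp hxs' with hx1 | hx2
                · have hxA : x ∈ A := sdiff_subset (hs'A₁ hx1)
                  rcases huP x hxA hadj with hL | hP
                  · exact absurd (mem_insert_of_mem hL) (mem_sdiff.mp (hs'A₁ hx1)).2
                  · exact mem_union_right _ hP
                · exact mem_union_left _ hx2
              have hcardf := (card_le_card hsubfil).trans (card_union_le _ _)
              rcases hup with hP0 | hle
              · rw [hP0] at hcardf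
                simp only [card_empty, union_empty, add_zero] at hcardf ⊢
                omega
              · omega
            · rcases mem_union.mp hv' with hvs | hvL1
              · have hvA₁ : v ∈ A₁ := hs'A₁ hvs
                have hfilsub : (insert u (s' ∪ L1)).filter (G.Adj v) ⊆
                    insert u (s'.filter (G.Adj v)) := by
                  intro x hx
                  rw [mem_filter] at hx
                  obtain ⟨hxs, hadj⟩ := hx
                  rcases mem_insert.mp hxs with rfl | hxs'
                  · exact mem_insert_self _ _
                  rcases mem_union.mp hxs' with hx1 | hx2
                  · exact mem_insert_of_mem (mem_filter.mpr ⟨hx1, hadj⟩)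
                  · exfalso
                    have hvu : v = u :=
                      hLonly x ((filter_subset _ _) hx2) v (mem_sdiff.mp hvA₁).1 hadj.symm
                    exact huA₁ (hvu ▸ hvA₁)
                have hcardf := (card_le_card hfilsub).trans (card_insert_le _ _)
                have hC1v := hC1 v hvs
                by_cases hvP : v ∈ P
                · have hw'v : w' v = w v + 1 := by simp [hw'def, hvP]
                  rw [hw'v] at hC1v
                  omega
                · have hfilsub2 : (insert u (s' ∪ L1)).filter (G.Adj v) ⊆
                      s'.filter (G.Adj v) := by
                    intro x hx
                    rw [mem_filter] at hx
                    obtain ⟨hxs, hadj⟩ := hx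
                    rcases mem_insert.mp hxs with rfl | hxs'
                    · exfalso
                      rcases huP v (mem_sdiff.mp hvA₁).1 hadj.symm with hL | hP
                      · exact (mem_sdiff.mp hvA₁).2 (mem_insert_of_mem hL)
                      · exact hvP hP
                    rcases mem_union.mp hxs' with hx1 | hx2
                    · exact mem_filter.mpr ⟨hx1, hadj⟩
                    · exfalso
                      have hvu : v = u :=
                        hLonly x ((filter_subset _ _) hx2) v (mem_sdiff.mp hvA₁).1 hadj.symm
                      exact huA₁ (hvu ▸ hvA₁)
                  have hcardf2 := card_le_card hfilsub2
                  have hw'v : w' v = w v := by simp [hw'def, hvP]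
                  rw [hw'v] at hC1v
                  omega
              · have hfil : (insert u (s' ∪ L1)).filter (G.Adj v) ⊆ {u} := by
                  intro x hx
                  rw [mem_filter] at hx
                  rw [mem_singleton]
                  exact hLonly v ((filter_subset _ _) hvL1) x (hssub hx.1) hx.2
                have hcardf : ((insert u (s' ∪ L1)).filter (G.Adj v)).card ≤ 1 := by
                  simpa using card_le_card hfil
                have := (mem_filter.mp hvL1).2
                omega
          · have hcards : (insert u (s' ∪ L1)).card = s'.card + L1.card + 1 := by
              rw [card_insert_of_notMem hus, card_union_of_disjoint hdisj]
            rw [hisoA, card_empty, hcards, hsumA, ← hcard1, ← hsplitcard, ← hsplitsum,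
              hL01]
            nlinarith [hC2, helse, hS1, hcS1, hPcard, ht1, hsplitcard2]
        · -- Plan 3 : use u and the light leaves, delete the parent z
          push_neg at hup
          obtain ⟨hPne, hk2⟩ := hup
          have hwu0 : w u = 0 := by omega
          have htk : t = k := by omega
          have hPz' : P = {z} := (Finset.subset_singleton_iff.mp hPz).resolve_left hPne.ne_empty
          have hzA₁ : z ∈ A₁ := hPA₁ (by rw [hPz']; exact mem_singleton_self z)
          set A₂ := A₁.erase z with hA₂def
          have hcard2 : A₂.card + 1 = A₁.card := by
            rw [hA₂def, card_erase_of_mem hzA₁]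
            have := card_pos.mpr ⟨z, hzA₁⟩
            omega
          obtain ⟨s', hs'A₂, hC1, hC2⟩ := ih A₂ w (by omega)
          have hs'A₁ : s' ⊆ A₁ := hs'A₂.trans (erase_subset _ _)
          have hsumA₁ : ∑ x ∈ A₁, w x = ∑ x ∈ A₂, w x + w z :=
            (Finset.sum_erase_add A₁ w hzA₁).symm
          have hdisj : Disjoint s' L1 :=
            Finset.disjoint_left.mpr
              (fun x hx hx1 => hLA₁ x ((filter_subset _ _) hx1) (hs'A₁ hx))
          have hus : u ∉ s' ∪ L1 := by
            rw [mem_union]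
            push_neg
            exact ⟨fun h => huA₁ (hs'A₁ h), fun h => huL ((filter_subset _ _) h)⟩
          have hssub : insert u (s' ∪ L1) ⊆ A :=
            insert_subset huA (union_subset (hs'A₁.trans sdiff_subset) hL1A)
          refine ⟨insert u (s' ∪ L1), hssub, ?_, ?_⟩
          · intro v hv
            rcases mem_insert.mp hv with rfl | hv'
            · have hsubfil : (insert v (s' ∪ L1)).filter (G.Adj v) ⊆ L1 := by
                intro x hx
                rw [mem_filter] at hx
                obtain ⟨hxs, hadj⟩ := hx
                rcases mem_insert.mp hxs with rfl | hxs'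
                · exact absurd hadj (G.irrefl (v := x))
                rcases mem_union.mp hxs' with hx1 | hx2
                · exfalso
                  have hxA₂ : x ∈ A₂ := hs'A₂ hx1
                  have hxA : x ∈ A := sdiff_subset (hs'A₁ hx1)
                  rcases huP x hxA hadj with hL | hP
                  · exact (mem_sdiff.mp (hs'A₁ hx1)).2 (mem_insert_of_mem hL)
                  · rw [hPz', mem_singleton] at hP
                    exact (mem_erase.mp hxA₂).1 hP
                · exact hx2
              have hcardf := card_le_card hsubfil
              omega
            · rcases mem_union.mp hv' with hvs | hvL1
              · have hvA₂ : v ∈ A₂ := hs'A₂ hvs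
                have hvA₁ : v ∈ A₁ := hs'A₁ hvs
                have hfilsub2 : (insert u (s' ∪ L1)).filter (G.Adj v) ⊆
                    s'.filter (G.Adj v) := by
                  intro x hx
                  rw [mem_filter] at hx
                  obtain ⟨hxs, hadj⟩ := hx
                  rcases mem_insert.mp hxs with rfl | hxs'
                  · exfalso
                    rcases huP v (mem_sdiff.mp hvA₁).1 hadj.symm with hL | hP
                    · exact (mem_sdiff.mp hvA₁).2 (mem_insert_of_mem hL)
                    · rw [hPz', mem_singleton] at hP
                      exact (mem_erase.mp hvA₂).1 hP
                  rcases mem_union.mp hxs' with hx1 | hx2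
                  · exact mem_filter.mpr ⟨hx1, hadj⟩
                  · exfalso
                    have hvu : v = u :=
                      hLonly x ((filter_subset _ _) hx2) v (mem_sdiff.mp hvA₁).1 hadj.symm
                    exact huA₁ (hvu ▸ hvA₁)
                have hcardf2 := card_le_card hfilsub2
                have hC1v := hC1 v hvs
                omega
              · have hfil : (insert u (s' ∪ L1)).filter (G.Adj v) ⊆ {u} := by
                  intro x hx
                  rw [mem_filter] at hx
                  rw [mem_singleton]
                  exact hLonly v ((filter_subset _ _) hvL1) x (hssub hx.1) hx.2
                have hcardf : ((insert u (s' ∪ L1)).filter (G.Adj v)).card ≤ 1 := by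
                  simpa using card_le_card hfil
                have := (mem_filter.mp hvL1).2
                omega
          · have hcards : (insert u (s' ∪ L1)).card = s'.card + L1.card + 1 := by
              rw [card_insert_of_notMem hus, card_union_of_disjoint hdisj]
            rw [hisoA, card_empty, hcards, hsumA, hsumA₁, ← hcard1, ← hcard2,
              ← hsplitcard, ← hsplitsum, hL01]
            nlinarith [hC2, hS1, hcS1, hwu0, htk, hsplitcard2, ht1]

theorem stmt_19 {V : Type*} [Fintype V] [DecidableEq V] (G : SimpleGraph V)
    [DecidableRel G.Adj] (hG : G.IsAcyclic) (k : ℕ) :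
    ∃ s : Finset V, (∀ v ∈ s, (s.filter (G.Adj v)).card ≤ k) ∧
      ((Fintype.card V - (Finset.univ.filter fun v => G.degree v = 0).card : ℝ) *
          (k + 1) / (k + 2) +
        (Finset.univ.filter fun v => G.degree v = 0).card ≤ s.card) := by
  classical
  obtain ⟨s, hsub, hC1, hC2⟩ :=
    forest_weighted G hG k (univ : Finset V).card univ (fun _ => 0) le_rfl
  refine ⟨s, fun v hv => by simpa using hC1 v hv, ?_⟩
  have hfiltereq : (univ.filter (fun v => ∀ x ∈ (univ : Finset V), ¬ G.Adj v x)) =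
      (univ.filter fun v => G.degree v = 0) := by
    apply filter_congr
    intro v _
    simp only [mem_univ, forall_true_left, eq_iff_iff]
    rw [← SimpleGraph.card_neighborFinset_eq_degree, Finset.card_eq_zero,
      Finset.eq_empty_iff_forall_notMem]
    constructor
    · intro h x hx
      exact h x ((SimpleGraph.mem_neighborFinset _ _ _).mp hx)
    · intro h x hx
      exact h x ((SimpleGraph.mem_neighborFinset _ _ _).mpr hx)
  rw [hfiltereq] at hC2
  simp only [Finset.mul_sum, Finset.sum_const_zero, mul_zero, add_zero] at hC2
  set m := (univ.filter fun v => G.degree v = 0).card with hm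
  have hmn : m ≤ Fintype.card V := by
    rw [hm, ← Finset.card_univ]
    exact card_le_card (filter_subset _ _)
  rw [Finset.card_univ] at hC2
  have hC2' : ((k : ℝ) + 1) * (Fintype.card V) + m ≤ ((k : ℝ) + 2) * s.card := by
    exact_mod_cast hC2
  have hk2 : (0 : ℝ) < (k : ℝ) + 2 := by positivity
  rw [div_add' _ _ _ (ne_of_gt hk2), div_le_iff₀ hk2]
  have hmn' : (m : ℝ) ≤ (Fintype.card V : ℝ) := by exact_mod_cast hmn
  nlinarith [hC2']
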